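/- Fix p ∈ (0,1/2). Suppose the measurement operator A: Sym(d) → ℝᵐ satisfies, for some δ with 0 < δ < √(2/π), the ℓ₁/ℓ₂-RIP bound |(1/m)‖A(X)‖₁ − √(2/π)‖X‖_F| ≤ δ‖X‖_F for all symmetric X of rank at most k + r, and additionally the restricted operator A_{S^c} (keeping only coordinates outside the corruption set S, with |S^c| ≥ (1−ε)(1−p)m) satisfies |(1/|S^c|)‖A_{S^c}(X)‖₁ − √(2/π)‖X‖_F| ≤ δ‖X‖_F on the same set of matrices. If 2(1−p)(1−ε)(√(2/π) − δ) − (√(2/π) + δ) > 0, then any global minimizer F★ ∈ ℝ^{d×k} of F ↦ (1/(2m))‖A(F Fᵀ) − y‖₁, where yᵢ = ⟨Aᵢ, X♮⟩ + sᵢ, sᵢ = 0 for i ∉ S, and X♮ is symmetric PSD of rank r ≤ k, satisfies F★F★ᵀ = X♮. -/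

import Mathlib

open Matrix BigOperators

/-- Frobenius norm of a real matrix. -/
noncomputable def frobNorm {d : ℕ} (A : Matrix (Fin d) (Fin d) ℝ) : ℝ :=
  Real.sqrt (∑ i, ∑ j, (A i j) ^ 2)

/-- Trace inner product of real matrices. -/
def ip {d : ℕ} (A B : Matrix (Fin d) (Fin d) ℝ) : ℝ := ∑ i, ∑ j, A i j * B i j


lemma exists_factor {d k : ℕ} (X : Matrix (Fin d) (Fin d) ℝ) (hX : X.PosSemidef)
    (hrk : X.rank ≤ k) : ∃ G : Matrix (Fin d) (Fin k) ℝ, G * Gᵀ = X := by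
  classical
  have hH := hX.1
  set lam := hH.eigenvalues with hlam
  set U : Matrix (Fin d) (Fin d) ℝ := (hH.eigenvectorUnitary : Matrix (Fin d) (Fin d) ℝ) with hU
  set M : Matrix (Fin d) (Fin d) ℝ := fun a j => U a j * Real.sqrt (lam j) with hM
  have hXe : ∀ a c, X a c = ∑ j, M a j * M c j := by
    intro a c
    conv_lhs => rw [hH.spectral_theorem, Unitary.conjStarAlgAut_apply]
    rw [Matrix.mul_apply]
    refine Finset.sum_congr rfl fun j _ => ?_
    rw [Matrix.mul_diagonal]
    simp only [Matrix.star_apply, Function.comp_apply, RCLike.ofReal_real_eq_id, id_eq,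
      star_trivial, hM]
    have hnn : 0 ≤ lam j := hX.eigenvalues_nonneg j
    rw [show U a j * Real.sqrt (lam j) * (U c j * Real.sqrt (lam j))
        = U a j * (Real.sqrt (lam j) * Real.sqrt (lam j)) * U c j by ring,
      Real.mul_self_sqrt hnn]
  set T : Finset (Fin d) := Finset.univ.filter (fun i => lam i ≠ 0) with hT
  have hTcard : T.card ≤ k := by
    have h2 : Fintype.card {i // lam i ≠ 0} = T.card := by
      rw [hT]; exact Fintype.card_subtype _
    rw [hH.rank_eq_card_non_zero_eigs, ← hlam, h2] at hrk
    exact hrk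
  have hMzero : ∀ (a : Fin d) (j : Fin d), j ∉ T → M a j = 0 := by
    intro a j hj
    rw [hT, Finset.mem_filter] at hj
    push_neg at hj
    have : lam j = 0 := hj (Finset.mem_univ j)
    simp [hM, this]
  have hXe' : ∀ a c, X a c = ∑ j ∈ T, M a j * M c j := by
    intro a c
    rw [hXe a c]
    symm
    refine Finset.sum_subset (Finset.subset_univ T) fun j _ hj => ?_
    rw [hMzero a j hj, zero_mul]
  rcases T.eq_empty_or_nonempty with hTe | hTne
  · refine ⟨0, ?_⟩
    ext a c
    rw [hXe' a c, hTe]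
    simp
  · have hk : 0 < k := lt_of_lt_of_le (Finset.card_pos.2 hTne) hTcard
    haveI : Nonempty (Fin k) := ⟨⟨0, hk⟩⟩
    set f : {x // x ∈ T} → Fin k := fun i => Fin.castLE hTcard (T.equivFin i) with hf
    have hfinj : Function.Injective f := fun i j h =>
      T.equivFin.injective (Fin.castLE_injective hTcard h)
    set g : Fin d → Fin k := fun i => if h : i ∈ T then f ⟨i, h⟩ else Classical.arbitrary _ with hg
    have hginj : ∀ i ∈ T, ∀ j ∈ T, g i = g j → i = j := by
      intro i hi j hj h
      rw [hg] at h
      simp only [dif_pos hi, dif_pos hj] at h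
      exact congrArg Subtype.val (hfinj h)
    refine ⟨fun a b => ∑ i ∈ T, if g i = b then M a i else 0, ?_⟩
    ext a c
    erw [Matrix.mul_apply]
    show ∑ b, (∑ i ∈ T, if g i = b then M a i else 0) * (∑ j ∈ T, if g j = b then M c j else 0) = X a c
    have step1 : ∀ b : Fin k,
        (∑ i ∈ T, if g i = b then M a i else 0) * (∑ j ∈ T, if g j = b then M c j else 0)
        = ∑ i ∈ T, ∑ j ∈ T, (if g i = b then M a i else 0) * (if g j = b then M c j else 0) :=
      fun b => Finset.sum_mul_sum _ _ _ _
    rw [Finset.sum_congr rfl fun b _ => step1 b, Finset.sum_comm]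
    rw [Finset.sum_congr rfl fun i _ => Finset.sum_comm]
    have step2 : ∀ i ∈ T, ∀ j ∈ T,
        (∑ b : Fin k, (if g i = b then M a i else 0) * (if g j = b then M c j else 0))
        = if g i = g j then M a i * M c j else 0 := by
      intro i _ j _
      by_cases h : g i = g j
      · rw [if_pos h]
        have hterm : ∀ b : Fin k, (if g i = b then M a i else 0) * (if g j = b then M c j else 0)
            = if g i = b then M a i * M c j else 0 := by
          intro b
          by_cases hb : g i = b
          · rw [if_pos hb, if_pos hb, if_pos (h ▸ hb)]
          · rw [if_neg hb, zero_mul, if_neg hb]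
        rw [Finset.sum_congr rfl fun b _ => hterm b]
        simp
      · rw [if_neg h]
        apply Finset.sum_eq_zero
        intro b _
        by_cases hb : g i = b
        · have hb2 : ¬ g j = b := fun hc => h (hb.trans hc.symm)
          rw [if_neg hb2, mul_zero]
        · rw [if_neg hb, zero_mul]
    rw [Finset.sum_congr rfl (fun i hi => Finset.sum_congr rfl (fun j hj => step2 i hi j hj))]
    have step3 : ∀ i ∈ T, (∑ j ∈ T, if g i = g j then M a i * M c j else 0) = M a i * M c i := by
      intro i hi
      rw [Finset.sum_eq_single_of_mem i hi]
      · rw [if_pos rfl]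
      · intro j hj hne
        exact if_neg (fun hc => hne ((hginj i hi j hj hc).symm))
    rw [Finset.sum_congr rfl step3]
    exact (hXe' a c).symm


lemma rank_sub_le' {d : ℕ} (A B : Matrix (Fin d) (Fin d) ℝ) :
    (A - B).rank ≤ A.rank + B.rank := by
  classical
  have hle : LinearMap.range (A - B).mulVecLin ≤
      LinearMap.range A.mulVecLin ⊔ LinearMap.range B.mulVecLin := by
    rintro x ⟨v, rfl⟩
    have hx : (A - B).mulVecLin v = A.mulVecLin v - B.mulVecLin v := by
      simp [Matrix.mulVecLin_apply, Matrix.sub_mulVec]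
    rw [hx]
    exact Submodule.sub_mem _ (Submodule.mem_sup_left ⟨v, rfl⟩)
      (Submodule.mem_sup_right ⟨v, rfl⟩)
  calc (A - B).rank
      ≤ Module.finrank ℝ (LinearMap.range A.mulVecLin ⊔ LinearMap.range B.mulVecLin : Submodule ℝ (Fin d → ℝ)) :=
        Submodule.finrank_mono hle
    _ ≤ A.rank + B.rank := Submodule.finrank_add_le_finrank_add_finrank _ _


/-- Identifiability under `ℓ₁/ℓ₂`-RIP: any global minimizer `F★` of the robust `ℓ₁` objective
recovers the ground truth, `F★ F★ᵀ = X♮`. -/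
theorem stmt17 {d k r m : ℕ} (A : Fin m → Matrix (Fin d) (Fin d) ℝ)
    (p ε δ : ℝ) (hp0 : 0 < p) (hp : p < 1 / 2) (hε : 0 ≤ ε)
    (hδ0 : 0 < δ) (hδ : δ < Real.sqrt (2 / Real.pi))
    (hRIP : ∀ X : Matrix (Fin d) (Fin d) ℝ, Xᵀ = X → X.rank ≤ k + r →
      |(m : ℝ)⁻¹ * ∑ i, |ip (A i) X| - Real.sqrt (2 / Real.pi) * frobNorm X| ≤ δ * frobNorm X)
    (S : Finset (Fin m))
    (hScard : (1 - ε) * (1 - p) * m ≤ (Sᶜ.card : ℝ))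
    (hRIPc : ∀ X : Matrix (Fin d) (Fin d) ℝ, Xᵀ = X → X.rank ≤ k + r →
      |((Sᶜ.card : ℝ))⁻¹ * ∑ i ∈ Sᶜ, |ip (A i) X| - Real.sqrt (2 / Real.pi) * frobNorm X|
        ≤ δ * frobNorm X)
    (hcond : 0 < 2 * (1 - p) * (1 - ε) * (Real.sqrt (2 / Real.pi) - δ)
        - (Real.sqrt (2 / Real.pi) + δ))
    (X : Matrix (Fin d) (Fin d) ℝ) (hXpsd : X.PosSemidef) (hXrank : X.rank = r) (hrk : r ≤ k)
    (s y : Fin m → ℝ) (hs : ∀ i ∉ S, s i = 0) (hy : ∀ i, y i = ip (A i) X + s i)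
    (F : Matrix (Fin d) (Fin k) ℝ)
    (hmin : ∀ G : Matrix (Fin d) (Fin k) ℝ,
      (1 / (2 * m : ℝ)) * ∑ i, |ip (A i) (F * Fᵀ) - y i| ≤
        (1 / (2 * m : ℝ)) * ∑ i, |ip (A i) (G * Gᵀ) - y i|) :
    F * Fᵀ = X := by
  classical
  set Z : Matrix (Fin d) (Fin d) ℝ := F * Fᵀ - X with hZ
  set q : ℝ := Real.sqrt (2 / Real.pi) with hqdef
  have hq0 : 0 ≤ q := Real.sqrt_nonneg _
  have hXt : Xᵀ = X := by
    rw [← Matrix.conjTranspose_eq_transpose_of_trivial]; exact hXpsd.1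
  have hZt : Zᵀ = Z := by
    rw [hZ, Matrix.transpose_sub, Matrix.transpose_mul, Matrix.transpose_transpose, hXt]
  have hZrank : Z.rank ≤ k + r := by
    rw [hZ]
    refine le_trans (rank_sub_le' _ _) ?_
    have h1 : (F * Fᵀ).rank ≤ k := by
      refine le_trans (Matrix.rank_mul_le_left F Fᵀ) ?_
      simpa using Matrix.rank_le_card_width F
    omega
  have hiplin : ∀ i, ip (A i) (F * Fᵀ) - y i = ip (A i) Z - s i := by
    intro i
    rw [hy i]
    have hsub : ip (A i) Z = ip (A i) (F * Fᵀ) - ip (A i) X := by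
      simp [ip, hZ, Matrix.sub_apply, mul_sub, Finset.sum_sub_distrib]
    rw [hsub]; ring
  have key : frobNorm Z = 0 → F * Fᵀ = X := by
    intro h
    have hnn : (0:ℝ) ≤ ∑ i, ∑ j, (Z i j) ^ 2 := by positivity
    have hsum : ∑ i, ∑ j, (Z i j) ^ 2 = 0 := by
      rw [frobNorm] at h
      exact (Real.sqrt_eq_zero hnn).mp h
    have hent : ∀ i j, Z i j = 0 := by
      intro i j
      have h1 := (Finset.sum_eq_zero_iff_of_nonneg
        (fun i _ => Finset.sum_nonneg fun j _ => sq_nonneg (Z i j))).mp hsum i (Finset.mem_univ i)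
      have h2 := (Finset.sum_eq_zero_iff_of_nonneg
        (fun j _ => sq_nonneg (Z i j))).mp h1 j (Finset.mem_univ j)
      exact (pow_eq_zero_iff two_ne_zero).mp h2
    ext i j
    have := hent i j
    rw [hZ, Matrix.sub_apply, sub_eq_zero] at this
    exact this
  apply key
  by_contra hne
  have hpos : 0 < frobNorm Z :=
    lt_of_le_of_ne (Real.sqrt_nonneg _) (Ne.symm hne)
  set nz : ℝ := frobNorm Z with hnz
  have h1 := hRIP Z hZt hZrank
  have h2 := hRIPc Z hZt hZrank
  by_cases hc : Sᶜ.card = 0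
  · have hSe : Sᶜ = ∅ := Finset.card_eq_zero.mp hc
    rw [hSe] at h2
    simp only [Finset.sum_empty, mul_zero, zero_sub, abs_neg] at h2
    rw [abs_of_nonneg (by positivity)] at h2
    nlinarith
  · have hcpos : 0 < ((Sᶜ.card : ℕ) : ℝ) := by
      exact_mod_cast Nat.pos_of_ne_zero hc
    have hmn : Sᶜ.card ≤ m := le_trans (Finset.card_le_univ _) (by simp)
    have hm : 0 < (m : ℝ) := by
      have : 0 < m := lt_of_lt_of_le (Nat.pos_of_ne_zero hc) hmn
      exact_mod_cast this
    -- use the minimizer property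
    have hXrk : X.rank ≤ k := by rw [hXrank]; exact hrk
    obtain ⟨G, hG⟩ := exists_factor X hXpsd hXrk
    have hobj := hmin G
    rw [hG] at hobj
    have hfac : 0 < 1 / (2 * (m : ℝ)) := by positivity
    have hsum1 : ∑ i, |ip (A i) (F * Fᵀ) - y i| ≤ ∑ i, |ip (A i) X - y i| :=
      le_of_mul_le_mul_left (by linarith [hobj]) hfac
    have hrhs : ∀ i, |ip (A i) X - y i| = |s i| := by
      intro i; rw [hy i]; rw [show ip (A i) X - (ip (A i) X + s i) = -(s i) by ring, abs_neg]
    have hlhs : ∀ i, |ip (A i) (F * Fᵀ) - y i| = |ip (A i) Z - s i| := by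
      intro i; rw [hiplin i]
    rw [Finset.sum_congr rfl fun i _ => hlhs i, Finset.sum_congr rfl fun i _ => hrhs i] at hsum1
    -- split sums over S and Sᶜ
    have esplit : ∀ f : Fin m → ℝ, ∑ i ∈ S, f i + ∑ i ∈ Sᶜ, f i = ∑ i, f i :=
      fun f => Finset.sum_add_sum_compl S f
    have hsczero : ∀ i ∈ Sᶜ, s i = 0 := fun i hi => hs i (Finset.mem_compl.mp hi)
    have e2 : ∑ i ∈ Sᶜ, |ip (A i) Z - s i| = ∑ i ∈ Sᶜ, |ip (A i) Z| := by
      refine Finset.sum_congr rfl fun i hi => ?_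
      rw [hsczero i hi, sub_zero]
    have e3 : ∑ i, |s i| = ∑ i ∈ S, |s i| := by
      rw [← esplit fun i => |s i|]
      have : ∑ i ∈ Sᶜ, |s i| = 0 :=
        Finset.sum_eq_zero fun i hi => by rw [hsczero i hi, abs_zero]
      rw [this, add_zero]
    have e4 : ∑ i ∈ S, |s i| - ∑ i ∈ S, |ip (A i) Z| ≤ ∑ i ∈ S, |ip (A i) Z - s i| := by
      rw [← Finset.sum_sub_distrib]
      refine Finset.sum_le_sum fun i _ => ?_
      calc |s i| - |ip (A i) Z| ≤ |s i - ip (A i) Z| := abs_sub_abs_le_abs_sub _ _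
        _ = |ip (A i) Z - s i| := abs_sub_comm _ _
    have hkey3 : ∑ i ∈ Sᶜ, |ip (A i) Z| ≤ ∑ i ∈ S, |ip (A i) Z| := by
      have := esplit fun i => |ip (A i) Z - s i|
      linarith [hsum1, e2, e3, e4, this]
    have hSA : ∑ i, |ip (A i) Z| ≤ (m : ℝ) * ((q + δ) * nz) := by
      have h1' := (abs_le.mp h1).2
      have hh : (m : ℝ)⁻¹ * ∑ i, |ip (A i) Z| ≤ (q + δ) * nz := by
        rw [hqdef, hnz]; nlinarith [h1']
      calc ∑ i, |ip (A i) Z| = (m : ℝ) * ((m : ℝ)⁻¹ * ∑ i, |ip (A i) Z|) := by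
            rw [← mul_assoc, mul_inv_cancel₀ hm.ne', one_mul]
        _ ≤ (m : ℝ) * ((q + δ) * nz) := mul_le_mul_of_nonneg_left hh hm.le
    have hSC : ((Sᶜ.card : ℕ) : ℝ) * ((q - δ) * nz) ≤ ∑ i ∈ Sᶜ, |ip (A i) Z| := by
      have h2' := (abs_le.mp h2).1
      have hh : (q - δ) * nz ≤ ((Sᶜ.card : ℕ) : ℝ)⁻¹ * ∑ i ∈ Sᶜ, |ip (A i) Z| := by
        rw [hqdef, hnz]; nlinarith [h2']
      calc ((Sᶜ.card : ℕ) : ℝ) * ((q - δ) * nz)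
          ≤ ((Sᶜ.card : ℕ) : ℝ) * (((Sᶜ.card : ℕ) : ℝ)⁻¹ * ∑ i ∈ Sᶜ, |ip (A i) Z|) :=
            mul_le_mul_of_nonneg_left hh hcpos.le
        _ = ∑ i ∈ Sᶜ, |ip (A i) Z| := by
            rw [← mul_assoc, mul_inv_cancel₀ hcpos.ne', one_mul]
    have h2SC : 2 * ∑ i ∈ Sᶜ, |ip (A i) Z| ≤ ∑ i, |ip (A i) Z| := by
      have := esplit fun i => |ip (A i) Z|
      linarith [hkey3, this]
    have hqd : 0 < q - δ := by rw [hqdef]; linarith [hδ]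
    have hstep : 2 * ((1 - ε) * (1 - p) * (m : ℝ)) * ((q - δ) * nz)
        ≤ 2 * (((Sᶜ.card : ℕ) : ℝ) * ((q - δ) * nz)) := by
      have h := mul_le_mul_of_nonneg_right hScard (mul_pos hqd hpos).le
      linarith [h]
    have hfin : 0 < (2 * (1 - p) * (1 - ε) * (q - δ) - (q + δ)) * ((m : ℝ) * nz) :=
      mul_pos hcond (mul_pos hm hpos)
    linarith [hstep, hSC, h2SC, hSA, hfin]
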